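/- Positive definiteness of the scheme operator A: Let Δt > 0, M > 0, β ≥ 0, α ≥ 0 and set c = 2/Δt^2 + β/Δt. Let u be a grid function such that u, Δ_h u and Δ_h^2 u (each extended to ghost cells via its own discrete Neumann BC) all satisfy the discrete Neumann BC. Then (c u - (M/2) Δ_h^3 u - (Mα/2) Δ_h u, u)_m = c ‖u‖_m^2 + (M/2) ‖∇_h(Δ_h u)‖^2 + (Mα/2) ‖∇_h u‖^2; in particular this quantity is strictly positive unless u_{i,j} = 0 at all interior cells. -/

import Mathlib

open Finset

/-- Discrete inner product `(f,g)_m` over interior cells `i = 1,...,Nx`, `j = 1,...,Ny`. -/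
noncomputable def innerM (Nx Ny : ℕ) (hx hy : ℝ) (f g : ℕ → ℕ → ℝ) : ℝ :=
  ∑ i ∈ Finset.Icc 1 Nx, ∑ j ∈ Finset.Icc 1 Ny, hx * hy * f i j * g i j

/-- Discrete inner product `(u,v)_x` for x-edge arrays; index `i` stands for `i + 1/2`. -/
noncomputable def innerX (Nx Ny : ℕ) (hx hy : ℝ) (u v : ℕ → ℕ → ℝ) : ℝ :=
  ∑ i ∈ Finset.Icc 1 (Nx - 1), ∑ j ∈ Finset.Icc 1 Ny, hx * hy * u i j * v i j

/-- Discrete inner product `(u,v)_y` for y-edge arrays; index `j` stands for `j + 1/2`. -/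
noncomputable def innerY (Nx Ny : ℕ) (hx hy : ℝ) (u v : ℕ → ℕ → ℝ) : ℝ :=
  ∑ i ∈ Finset.Icc 1 Nx, ∑ j ∈ Finset.Icc 1 (Ny - 1), hx * hy * u i j * v i j

/-- `[d_x g]_{i+1/2, j}`, stored at index `(i, j)`. -/
noncomputable def dX (hx : ℝ) (g : ℕ → ℕ → ℝ) : ℕ → ℕ → ℝ := fun i j => (g (i + 1) j - g i j) / hx

/-- `[d_y g]_{i, j+1/2}`, stored at index `(i, j)`. -/
noncomputable def dY (hy : ℝ) (g : ℕ → ℕ → ℝ) : ℕ → ℕ → ℝ := fun i j => (g i (j + 1) - g i j) / hy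

/-- `[D_x w]_{i,j} = (w_{i+1/2,j} - w_{i-1/2,j})/h_x` for an x-edge array `w`. -/
noncomputable def DX (hx : ℝ) (w : ℕ → ℕ → ℝ) : ℕ → ℕ → ℝ := fun i j => (w i j - w (i - 1) j) / hx

/-- `[D_y w]_{i,j} = (w_{i,j+1/2} - w_{i,j-1/2})/h_y` for a y-edge array `w`. -/
noncomputable def DY (hy : ℝ) (w : ℕ → ℕ → ℝ) : ℕ → ℕ → ℝ := fun i j => (w i j - w i (j - 1)) / hy

/-- Five-point discrete Laplacian `[Δ_h g]_{i,j}` (meaningful at interior cells). -/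
noncomputable def lapH (hx hy : ℝ) (g : ℕ → ℕ → ℝ) : ℕ → ℕ → ℝ := fun i j =>
  (g (i + 1) j - 2 * g i j + g (i - 1) j) / hx ^ 2 +
  (g i (j + 1) - 2 * g i j + g i (j - 1)) / hy ^ 2

/-- The discrete homogeneous Neumann boundary condition for a grid function. -/
noncomputable def NeumannBC (Nx Ny : ℕ) (g : ℕ → ℕ → ℝ) : Prop :=
  (∀ j ∈ Finset.Icc 1 Ny, g 0 j = g 1 j ∧ g (Nx + 1) j = g Nx j) ∧
  (∀ i ∈ Finset.Icc 1 Nx, g i 0 = g i 1 ∧ g i (Ny + 1) = g i Ny)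

/-- Extension of interior data to ghost cells via the discrete Neumann BC
(clamping of indices to the interior range). -/
noncomputable def extN (Nx Ny : ℕ) (u : ℕ → ℕ → ℝ) : ℕ → ℕ → ℝ := fun i j =>
  u (min (max i 1) Nx) (min (max j 1) Ny)

/-- `‖∇_h g‖² = (d_x g, d_x g)_x + (d_y g, d_y g)_y`. -/
noncomputable def gradSq (Nx Ny : ℕ) (hx hy : ℝ) (g : ℕ → ℕ → ℝ) : ℝ :=
  innerX Nx Ny hx hy (dX hx g) (dX hx g) + innerY Nx Ny hx hy (dY hy g) (dY hy g)

/-- `Δ_h² g`, where `Δ_h g` is extended to ghost cells via its own Neumann BC. -/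
noncomputable def lap2H (Nx Ny : ℕ) (hx hy : ℝ) (g : ℕ → ℕ → ℝ) : ℕ → ℕ → ℝ :=
  lapH hx hy (extN Nx Ny (lapH hx hy g))

/-- `Δ_h³ g`, where `Δ_h g`, `Δ_h² g` are extended to ghost cells via their own Neumann BC. -/
noncomputable def lap3H (Nx Ny : ℕ) (hx hy : ℝ) (g : ℕ → ℕ → ℝ) : ℕ → ℕ → ℝ :=
  lapH hx hy (extN Nx Ny (lap2H Nx Ny hx hy g))

/-- Discrete energy `E_1^h(g) = Σ h_x h_y F(g_{ij})` with `F(s) = s⁴/4`. -/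
noncomputable def E1h (Nx Ny : ℕ) (hx hy : ℝ) (g : ℕ → ℕ → ℝ) : ℝ :=
  ∑ i ∈ Finset.Icc 1 Nx, ∑ j ∈ Finset.Icc 1 Ny, hx * hy * (g i j ^ 4 / 4)

lemma icc_to_range (N : ℕ) (f : ℕ → ℝ) :
    ∑ i ∈ Finset.Icc 1 N, f i = ∑ i ∈ Finset.range N, f (i + 1) := by
  rw [← Finset.Ico_add_one_right_eq_Icc, Finset.sum_Ico_eq_sum_range]
  simp [add_comm]

lemma sbp1 (m : ℕ) (r : ℝ) (a b : ℕ → ℝ) :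
    ∑ i ∈ Finset.range (m+1), r * (a (i+2) - 2*a (i+1) + a i) * b (i+1)
      = r * (a (m+2) - a (m+1)) * b (m+1) - r * (a 1 - a 0) * b 1
        - ∑ i ∈ Finset.range m, r * (a (i+2) - a (i+1)) * (b (i+2) - b (i+1)) := by
  induction m with
  | zero => simp [Finset.sum_range_one]; ring
  | succ n ih => rw [Finset.sum_range_succ, ih, Finset.sum_range_succ]; ring

lemma sbp_row (m : ℕ) (r : ℝ) (a b : ℕ → ℝ) (h0 : a 0 = a 1) (h1 : a (m+2) = a (m+1)) :
    ∑ i ∈ Finset.Icc 1 (m+1), r * (a (i+1) - 2*a i + a (i-1)) * b i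
      = -∑ i ∈ Finset.Icc 1 m, r * (a (i+1) - a i) * (b (i+1) - b i) := by
  rw [icc_to_range, icc_to_range]
  have e : ∀ i : ℕ, (i + 1 : ℕ) - 1 = i := fun i => by omega
  simp only [e]
  rw [show (∑ i ∈ Finset.range (m+1), r * (a (i+1+1) - 2*a (i+1) + a i) * b (i+1))
      = ∑ i ∈ Finset.range (m+1), r * (a (i+2) - 2*a (i+1) + a i) * b (i+1) from rfl]
  rw [sbp1, h0, h1]
  simp

lemma sbp (Nx Ny : ℕ) (hNx : 1 ≤ Nx) (hNy : 1 ≤ Ny) (hx hy : ℝ)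
    (hhx : hx ≠ 0) (hhy : hy ≠ 0) (v u : ℕ → ℕ → ℝ) (hv : NeumannBC Nx Ny v) :
    innerM Nx Ny hx hy (lapH hx hy v) u
      = -(innerX Nx Ny hx hy (dX hx v) (dX hx u) + innerY Nx Ny hx hy (dY hy v) (dY hy u)) := by
  obtain ⟨m, rfl⟩ : ∃ m, Nx = m + 1 := ⟨Nx - 1, by omega⟩
  obtain ⟨n, rfl⟩ : ∃ n, Ny = n + 1 := ⟨Ny - 1, by omega⟩
  have split : ∀ i j, hx * hy * lapH hx hy v i j * u i j
      = (hy/hx) * (v (i+1) j - 2*v i j + v (i-1) j) * u i j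
        + (hx/hy) * (v i (j+1) - 2*v i j + v i (j-1)) * u i j := by
    intro i j
    simp only [lapH]
    field_simp
  have hX : ∑ i ∈ Finset.Icc 1 (m+1), ∑ j ∈ Finset.Icc 1 (n+1),
        (hy/hx) * (v (i+1) j - 2*v i j + v (i-1) j) * u i j
      = - innerX (m+1) (n+1) hx hy (dX hx v) (dX hx u) := by
    rw [Finset.sum_comm]
    rw [Finset.sum_congr rfl (fun j hj =>
      sbp_row m (hy/hx) (fun i => v i j) (fun i => u i j) ((hv.1 j hj).1) ((hv.1 j hj).2))]
    rw [Finset.sum_neg_distrib]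
    refine congrArg Neg.neg ?_
    rw [innerX]
    simp only [Nat.add_sub_cancel]
    rw [Finset.sum_comm]
    refine Finset.sum_congr rfl fun j _ => Finset.sum_congr rfl fun i _ => ?_
    simp only [dX]
    field_simp
  have hY : ∑ i ∈ Finset.Icc 1 (m+1), ∑ j ∈ Finset.Icc 1 (n+1),
        (hx/hy) * (v i (j+1) - 2*v i j + v i (j-1)) * u i j
      = - innerY (m+1) (n+1) hx hy (dY hy v) (dY hy u) := by
    rw [Finset.sum_congr rfl (fun i hi =>
      sbp_row n (hx/hy) (fun j => v i j) (fun j => u i j) ((hv.2 i hi).1) ((hv.2 i hi).2))]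
    simp only [Finset.sum_neg_distrib]
    refine congrArg Neg.neg ?_
    rw [innerY]
    simp only [Nat.add_sub_cancel]
    refine Finset.sum_congr rfl fun i _ => Finset.sum_congr rfl fun j _ => ?_
    simp only [dY]
    field_simp
  calc innerM (m+1) (n+1) hx hy (lapH hx hy v) u
      = ∑ i ∈ Finset.Icc 1 (m+1), ∑ j ∈ Finset.Icc 1 (n+1),
          ((hy/hx) * (v (i+1) j - 2*v i j + v (i-1) j) * u i j
            + (hx/hy) * (v i (j+1) - 2*v i j + v i (j-1)) * u i j) := by
        simp only [innerM, split]
    _ = - innerX (m+1) (n+1) hx hy (dX hx v) (dX hx u)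
          + - innerY (m+1) (n+1) hx hy (dY hy v) (dY hy u) := by
        simp only [Finset.sum_add_distrib]
        rw [hX, hY]
    _ = _ := by ring


lemma innerX_symm (Nx Ny : ℕ) (hx hy : ℝ) (u v : ℕ → ℕ → ℝ) :
    innerX Nx Ny hx hy u v = innerX Nx Ny hx hy v u :=
  Finset.sum_congr rfl fun _ _ => Finset.sum_congr rfl fun _ _ => by ring

lemma innerY_symm (Nx Ny : ℕ) (hx hy : ℝ) (u v : ℕ → ℕ → ℝ) :
    innerY Nx Ny hx hy u v = innerY Nx Ny hx hy v u :=
  Finset.sum_congr rfl fun _ _ => Finset.sum_congr rfl fun _ _ => by ring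

lemma innerM_symm (Nx Ny : ℕ) (hx hy : ℝ) (u v : ℕ → ℕ → ℝ) :
    innerM Nx Ny hx hy u v = innerM Nx Ny hx hy v u :=
  Finset.sum_congr rfl fun _ _ => Finset.sum_congr rfl fun _ _ => by ring

lemma innerM_congr (Nx Ny : ℕ) (hx hy : ℝ) (f f' g : ℕ → ℕ → ℝ)
    (h : ∀ i ∈ Finset.Icc 1 Nx, ∀ j ∈ Finset.Icc 1 Ny, f i j = f' i j) :
    innerM Nx Ny hx hy f g = innerM Nx Ny hx hy f' g :=
  Finset.sum_congr rfl fun i hi => Finset.sum_congr rfl fun j hj => by rw [h i hi j hj]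

lemma extN_eq (Nx Ny : ℕ) (u : ℕ → ℕ → ℝ) (i j : ℕ)
    (hi : i ∈ Finset.Icc 1 Nx) (hj : j ∈ Finset.Icc 1 Ny) : extN Nx Ny u i j = u i j := by
  simp only [Finset.mem_Icc] at hi hj
  simp only [extN]
  congr 1 <;> omega

lemma innerM_expand (Nx Ny : ℕ) (hx hy : ℝ) (c q r : ℝ) (u f g : ℕ → ℕ → ℝ) :
    innerM Nx Ny hx hy (fun i j => c * u i j - q * f i j - r * g i j) u
      = c * innerM Nx Ny hx hy u u - q * innerM Nx Ny hx hy f u - r * innerM Nx Ny hx hy g u := by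
  simp only [innerM, Finset.mul_sum, ← Finset.sum_sub_distrib]
  exact Finset.sum_congr rfl fun i _ => Finset.sum_congr rfl fun j _ => by ring

lemma innerM_self_pos (Nx Ny : ℕ) (hx hy : ℝ) (hhx : 0 < hx) (hhy : 0 < hy) (u : ℕ → ℕ → ℝ)
    (h : ∃ i ∈ Finset.Icc 1 Nx, ∃ j ∈ Finset.Icc 1 Ny, u i j ≠ 0) :
    0 < innerM Nx Ny hx hy u u := by
  obtain ⟨i0, hi0, j0, hj0, hne⟩ := h
  have hterm : ∀ i j : ℕ, 0 ≤ hx * hy * u i j * u i j := fun i j => by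
    nlinarith [mul_self_nonneg (u i j), mul_pos hhx hhy]
  refine Finset.sum_pos' (fun i _ => Finset.sum_nonneg fun j _ => hterm i j) ⟨i0, hi0, ?_⟩
  refine Finset.sum_pos' (fun j _ => hterm i0 j) ⟨j0, hj0, ?_⟩
  have := mul_self_pos.2 hne
  nlinarith [mul_pos hhx hhy]

lemma gradSq_nonneg (Nx Ny : ℕ) (hx hy : ℝ) (hhx : 0 < hx) (hhy : 0 < hy) (g : ℕ → ℕ → ℝ) :
    0 ≤ gradSq Nx Ny hx hy g := by
  have h1 : 0 ≤ innerX Nx Ny hx hy (dX hx g) (dX hx g) :=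
    Finset.sum_nonneg fun i _ => Finset.sum_nonneg fun j _ => by
      nlinarith [mul_self_nonneg (dX hx g i j), mul_pos hhx hhy]
  have h2 : 0 ≤ innerY Nx Ny hx hy (dY hy g) (dY hy g) :=
    Finset.sum_nonneg fun i _ => Finset.sum_nonneg fun j _ => by
      nlinarith [mul_self_nonneg (dY hy g i j), mul_pos hhx hhy]
  unfold gradSq
  linarith

/-- Positive definiteness of the scheme operator `A = cI - (M/2)Δ_h³ - (Mα/2)Δ_h`
with `c = 2/Δt² + β/Δt`:
`(A u, u)_m = c‖u‖_m² + (M/2)‖∇_h(Δ_h u)‖² + (Mα/2)‖∇_h u‖²`, which is strictly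
positive unless `u` vanishes at all interior cells. -/
theorem scheme_operator_positive
    (Nx Ny : ℕ) (hNx : 1 ≤ Nx) (hNy : 1 ≤ Ny)
    (hx hy : ℝ) (hhx : 0 < hx) (hhy : 0 < hy)
    (Δt M β α c : ℝ) (hΔt : 0 < Δt) (hM : 0 < M) (hβ : 0 ≤ β) (hα : 0 ≤ α)
    (hc : c = 2 / Δt ^ 2 + β / Δt)
    (u : ℕ → ℕ → ℝ) (hu : NeumannBC Nx Ny u)
    (hΔu : NeumannBC Nx Ny (extN Nx Ny (lapH hx hy u)))
    (hΔΔu : NeumannBC Nx Ny (extN Nx Ny (lap2H Nx Ny hx hy u))) :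
    innerM Nx Ny hx hy
        (fun i j => c * u i j - M / 2 * lap3H Nx Ny hx hy u i j
          - M * α / 2 * lapH hx hy u i j) u =
      c * innerM Nx Ny hx hy u u
        + M / 2 * gradSq Nx Ny hx hy (extN Nx Ny (lapH hx hy u))
        + M * α / 2 * gradSq Nx Ny hx hy u ∧
    ((∃ i ∈ Finset.Icc 1 Nx, ∃ j ∈ Finset.Icc 1 Ny, u i j ≠ 0) →
      0 < innerM Nx Ny hx hy
        (fun i j => c * u i j - M / 2 * lap3H Nx Ny hx hy u i j
          - M * α / 2 * lapH hx hy u i j) u) := by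
  have hcpos : 0 < c := by rw [hc]; positivity
  have hxne : hx ≠ 0 := ne_of_gt hhx
  have hyne : hy ≠ 0 := ne_of_gt hhy
  have h1 : innerM Nx Ny hx hy (lapH hx hy u) u = -(gradSq Nx Ny hx hy u) := by
    rw [sbp Nx Ny hNx hNy hx hy hxne hyne u u hu, gradSq]
  have h3 : innerM Nx Ny hx hy (lap3H Nx Ny hx hy u) u
      = -(gradSq Nx Ny hx hy (extN Nx Ny (lapH hx hy u))) := by
    calc innerM Nx Ny hx hy (lap3H Nx Ny hx hy u) u
        = innerM Nx Ny hx hy (lapH hx hy (extN Nx Ny (lap2H Nx Ny hx hy u))) u := rfl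
      _ = -(innerX Nx Ny hx hy (dX hx (extN Nx Ny (lap2H Nx Ny hx hy u))) (dX hx u)
            + innerY Nx Ny hx hy (dY hy (extN Nx Ny (lap2H Nx Ny hx hy u))) (dY hy u)) :=
          sbp Nx Ny hNx hNy hx hy hxne hyne _ u hΔΔu
      _ = -(innerX Nx Ny hx hy (dX hx u) (dX hx (extN Nx Ny (lap2H Nx Ny hx hy u)))
            + innerY Nx Ny hx hy (dY hy u) (dY hy (extN Nx Ny (lap2H Nx Ny hx hy u)))) := by
          rw [innerX_symm, innerY_symm]
      _ = innerM Nx Ny hx hy (lapH hx hy u) (extN Nx Ny (lap2H Nx Ny hx hy u)) :=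
          (sbp Nx Ny hNx hNy hx hy hxne hyne u _ hu).symm
      _ = innerM Nx Ny hx hy (extN Nx Ny (lapH hx hy u)) (extN Nx Ny (lap2H Nx Ny hx hy u)) :=
          innerM_congr Nx Ny hx hy _ _ _
            (fun i hi j hj => (extN_eq Nx Ny (lapH hx hy u) i j hi hj).symm)
      _ = innerM Nx Ny hx hy (extN Nx Ny (lap2H Nx Ny hx hy u)) (extN Nx Ny (lapH hx hy u)) :=
          innerM_symm _ _ _ _ _ _
      _ = innerM Nx Ny hx hy (lapH hx hy (extN Nx Ny (lapH hx hy u))) (extN Nx Ny (lapH hx hy u)) :=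
          innerM_congr Nx Ny hx hy _ _ _
            (fun i hi j hj => extN_eq Nx Ny (lap2H Nx Ny hx hy u) i j hi hj)
      _ = -(gradSq Nx Ny hx hy (extN Nx Ny (lapH hx hy u))) := by
          rw [sbp Nx Ny hNx hNy hx hy hxne hyne _ _ hΔu, gradSq]
  have hmain : innerM Nx Ny hx hy
        (fun i j => c * u i j - M / 2 * lap3H Nx Ny hx hy u i j
          - M * α / 2 * lapH hx hy u i j) u =
      c * innerM Nx Ny hx hy u u
        + M / 2 * gradSq Nx Ny hx hy (extN Nx Ny (lapH hx hy u))
        + M * α / 2 * gradSq Nx Ny hx hy u := by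
    rw [innerM_expand, h3, h1]
    ring
  refine ⟨hmain, fun hne => ?_⟩
  rw [hmain]
  have hIu := innerM_self_pos Nx Ny hx hy hhx hhy u hne
  have g1 := gradSq_nonneg Nx Ny hx hy hhx hhy (extN Nx Ny (lapH hx hy u))
  have g2 := gradSq_nonneg Nx Ny hx hy hhx hhy u
  have t1 : 0 < c * innerM Nx Ny hx hy u u := mul_pos hcpos hIu
  have t2 : 0 ≤ M / 2 * gradSq Nx Ny hx hy (extN Nx Ny (lapH hx hy u)) :=
    mul_nonneg (by linarith) g1
  have t3 : 0 ≤ M * α / 2 * gradSq Nx Ny hx hy u :=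
    mul_nonneg (by positivity) g2
  linarith
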